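/- Let g be a solution of equation (1.4) on an interval (0, b) with g(r) ≥ 0 and g'(r) ≥ 0 for all r ∈ (0, b). If g''(r₁) < 0 for some r₁ ∈ (0, b), then g''(r) < 0 for all r ∈ (0, r₁). -/

import Mathlib

/-- Equation (1.4): `g'' = (1 + g'²)·[((r/2) f'(r²+g²) − (n−1)/r) g' − (1/2) f'(r²+g²) g]`,
for a twice differentiable function `g` on the set `I`. -/
def SolvesEq14 (n : ℕ) (f : ℝ → ℝ) (g : ℝ → ℝ) (I : Set ℝ) : Prop :=
  ∀ r ∈ I,
    HasDerivAt g (deriv g r) r ∧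
    HasDerivAt (deriv g)
      ((1 + deriv g r ^ 2) *
        ((r / 2 * deriv f (r ^ 2 + g r ^ 2) - ((n : ℝ) - 1) / r) * deriv g r
          - deriv f (r ^ 2 + g r ^ 2) / 2 * g r)) r

/-- Auxiliary quantity `Q` such that `g'' = (1 + g'²) Q`. -/
noncomputable def Q14 (n : ℕ) (f g : ℝ → ℝ) (r : ℝ) : ℝ :=
  (r / 2 * deriv f (r ^ 2 + g r ^ 2) - ((n : ℝ) - 1) / r) * deriv g r
    - deriv f (r ^ 2 + g r ^ 2) / 2 * g r

/-- The derivative of `Q14` (raw expression). -/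
noncomputable def Q14d (n : ℕ) (f g : ℝ → ℝ) (r : ℝ) : ℝ :=
  (1 / 2 * deriv f (r ^ 2 + g r ^ 2)
      + r / 2 * (deriv (deriv f) (r ^ 2 + g r ^ 2) * (2 * r + 2 * g r * deriv g r))
      + ((n : ℝ) - 1) / r ^ 2) * deriv g r
    + (r / 2 * deriv f (r ^ 2 + g r ^ 2) - ((n : ℝ) - 1) / r)
        * ((1 + deriv g r ^ 2) * Q14 n f g r)
    - (deriv (deriv f) (r ^ 2 + g r ^ 2) * (2 * r + 2 * g r * deriv g r) / 2 * g r
        + deriv f (r ^ 2 + g r ^ 2) / 2 * deriv g r)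

/-- Coefficient `c` in the differential inequality `Q' = c Q + (nonneg)`. -/
noncomputable def C14 (n : ℕ) (f g : ℝ → ℝ) (r : ℝ) : ℝ :=
  (r / 2 * deriv f (r ^ 2 + g r ^ 2) - ((n : ℝ) - 1) / r) * (1 + deriv g r ^ 2)
    + 2 * deriv (deriv f) (r ^ 2 + g r ^ 2) * (r + g r * deriv g r)
        / deriv f (r ^ 2 + g r ^ 2)

lemma hasDerivAt_Q14 (n : ℕ) (f g : ℝ → ℝ) (r : ℝ) (hr : r ≠ 0)
    (hg1 : HasDerivAt g (deriv g r) r)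
    (hg2 : HasDerivAt (deriv g) ((1 + deriv g r ^ 2) * Q14 n f g r) r)
    (hdf : ∀ x, HasDerivAt (deriv f) (deriv (deriv f) x) x) :
    HasDerivAt (Q14 n f g) (Q14d n f g r) r := by
  have hF : HasDerivAt (fun x => x ^ 2 + g x ^ 2) (2 * r + 2 * g r * deriv g r) r := by
    have := (hasDerivAt_pow 2 r).add (hg1.pow 2)
    refine this.congr_deriv ?_
    push_cast
    ring
  have hdfF : HasDerivAt (fun x => deriv f (x ^ 2 + g x ^ 2))
      (deriv (deriv f) (r ^ 2 + g r ^ 2) * (2 * r + 2 * g r * deriv g r)) r :=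
    by have := (hdf (r ^ 2 + g r ^ 2)).comp r hF; exact this
  have hA : HasDerivAt (fun x => x / 2 * deriv f (x ^ 2 + g x ^ 2))
      (1 / 2 * deriv f (r ^ 2 + g r ^ 2)
        + r / 2 * (deriv (deriv f) (r ^ 2 + g r ^ 2) * (2 * r + 2 * g r * deriv g r))) r := by
    have := ((hasDerivAt_id r).div_const 2).mul hdfF
    exact this.congr_deriv rfl
  have hB : HasDerivAt (fun x => ((n : ℝ) - 1) / x) (-(((n : ℝ) - 1) / r ^ 2)) r := by
    have := (hasDerivAt_inv hr).const_mul ((n : ℝ) - 1)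
    simp only [div_eq_mul_inv]
    refine this.congr_deriv ?_
    ring
  have h := ((hA.sub hB).mul hg2).sub ((hdfF.div_const 2).mul hg1)
  have heq : (fun x => (x / 2 * deriv f (x ^ 2 + g x ^ 2) - ((n : ℝ) - 1) / x) * deriv g x
      - deriv f (x ^ 2 + g x ^ 2) / 2 * g x) = Q14 n f g := rfl
  refine h.congr_deriv ?_
  simp only [Pi.sub_apply]
  unfold Q14d
  ring

/-- If `g ≥ 0`, `g' ≥ 0` on `(0, b)` and `g''(r₁) < 0` for some `r₁ ∈ (0, b)`, then
`g'' < 0` on all of `(0, r₁)`. -/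
theorem concavity_propagates_left
    (n : ℕ) (hn : 2 ≤ n) (m M : ℝ) (hm : 0 < m) (hmM : m ≤ M)
    (f : ℝ → ℝ) (hf : ContDiff ℝ 2 f)
    (hconv : ∀ s : ℝ, 0 ≤ deriv (deriv f) s)
    (hlow : ∀ s : ℝ, m ≤ deriv f s) (hup : ∀ s : ℝ, deriv f s ≤ M)
    (b : ℝ) (g : ℝ → ℝ) (hg : SolvesEq14 n f g (Set.Ioo 0 b))
    (hg0 : ∀ r ∈ Set.Ioo (0 : ℝ) b, 0 ≤ g r)
    (hg0' : ∀ r ∈ Set.Ioo (0 : ℝ) b, 0 ≤ deriv g r)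
    (r₁ : ℝ) (hr₁ : r₁ ∈ Set.Ioo (0 : ℝ) b)
    (hconc : deriv (deriv g) r₁ < 0) :
    ∀ r ∈ Set.Ioo (0 : ℝ) r₁, deriv (deriv g) r < 0 := by
  -- basic facts about f
  have hf1 : ContDiff ℝ 1 (deriv f) := by
    have h2 : ContDiff ℝ ((1 : WithTop ℕ∞) + 1) f := by exact_mod_cast hf
    exact (contDiff_succ_iff_deriv.mp h2).2.2
  have hdf : ∀ x, HasDerivAt (deriv f) (deriv (deriv f) x) x := fun x =>
    (hf1.differentiable one_ne_zero x).hasDerivAt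
  have hdfc : Continuous (deriv f) := (hf1.differentiable one_ne_zero).continuous
  have hd2fc : Continuous (deriv (deriv f)) := by
    have h2 : ContDiff ℝ ((0 : WithTop ℕ∞) + 1) (deriv f) := by exact_mod_cast hf1
    exact (contDiff_succ_iff_deriv.mp h2).2.2.continuous
  have hdfpos : ∀ s, 0 < deriv f s := fun s => lt_of_lt_of_le hm (hlow s)
  have hn1 : (1 : ℝ) ≤ (n : ℝ) - 1 := by
    have : (2 : ℝ) ≤ (n : ℝ) := by exact_mod_cast hn
    linarith
  -- g'' in terms of Q14
  have hsecond : ∀ r ∈ Set.Ioo (0 : ℝ) b,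
      deriv (deriv g) r = (1 + deriv g r ^ 2) * Q14 n f g r := fun r hr =>
    (hg r hr).2.deriv
  -- Q14 is continuous on Ioo 0 b
  have hgc : ContinuousOn g (Set.Ioo 0 b) := fun r hr =>
    ((hg r hr).1.continuousAt).continuousWithinAt
  have hg1c : ContinuousOn (deriv g) (Set.Ioo 0 b) := fun r hr =>
    ((hg r hr).2.differentiableAt.continuousAt).continuousWithinAt
  have hFc : ContinuousOn (fun x => x ^ 2 + g x ^ 2) (Set.Ioo 0 b) :=
    (continuousOn_pow 2).add (hgc.pow 2)
  have hdfFc : ContinuousOn (fun x => deriv f (x ^ 2 + g x ^ 2)) (Set.Ioo 0 b) :=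
    hdfc.comp_continuousOn hFc
  have hd2fFc : ContinuousOn (fun x => deriv (deriv f) (x ^ 2 + g x ^ 2)) (Set.Ioo 0 b) :=
    hd2fc.comp_continuousOn hFc
  have hrne : ∀ r ∈ Set.Ioo (0 : ℝ) b, r ≠ 0 := fun r hr => ne_of_gt hr.1
  have hQc : ContinuousOn (Q14 n f g) (Set.Ioo 0 b) := by
    unfold Q14
    exact ((((continuousOn_id.div_const 2).mul hdfFc).sub
      (continuousOn_const.div continuousOn_id hrne)).mul hg1c).sub
      ((hdfFc.div_const 2).mul hgc)
  have hcc : ContinuousOn (C14 n f g) (Set.Ioo 0 b) := by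
    unfold C14
    refine ContinuousOn.add ?_ ?_
    · exact (((continuousOn_id.div_const 2).mul hdfFc).sub
        (continuousOn_const.div continuousOn_id hrne)).mul
        ((continuousOn_const.add (hg1c.pow 2)))
    · exact ((continuousOn_const.mul hd2fFc).mul
        (continuousOn_id.add (hgc.mul hg1c))).div hdfFc
        (fun r hr => ne_of_gt (hdfpos _))
  -- derivative of Q14 at points of Ioo 0 b
  have hQd : ∀ r ∈ Set.Ioo (0 : ℝ) b, HasDerivAt (Q14 n f g) (Q14d n f g r) r := fun r hr =>
    hasDerivAt_Q14 n f g r (hrne r hr) (hg r hr).1 (hg r hr).2 hdf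
  -- decomposition Q14d = C14 * Q14 + N with N ≥ 0
  have hdecomp : ∀ r ∈ Set.Ioo (0 : ℝ) b,
      Q14d n f g r = C14 n f g r * Q14 n f g r
        + (2 * ((n : ℝ) - 1) * deriv (deriv f) (r ^ 2 + g r ^ 2)
            * (r + g r * deriv g r) * deriv g r / (r * deriv f (r ^ 2 + g r ^ 2))
          + ((n : ℝ) - 1) * deriv g r / r ^ 2) := by
    intro r hr
    have h1 : r ≠ 0 := hrne r hr
    have h2 : deriv f (r ^ 2 + g r ^ 2) ≠ 0 := ne_of_gt (hdfpos _)
    unfold Q14d C14 Q14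
    field_simp
    ring
  have hNpos : ∀ r ∈ Set.Ioo (0 : ℝ) b,
      0 ≤ 2 * ((n : ℝ) - 1) * deriv (deriv f) (r ^ 2 + g r ^ 2)
            * (r + g r * deriv g r) * deriv g r / (r * deriv f (r ^ 2 + g r ^ 2))
          + ((n : ℝ) - 1) * deriv g r / r ^ 2 := by
    intro r hr
    have h1 : 0 < r := hr.1
    have h2 : 0 ≤ g r := hg0 r hr
    have h3 : 0 ≤ deriv g r := hg0' r hr
    have h4 : 0 ≤ deriv (deriv f) (r ^ 2 + g r ^ 2) := hconv _
    have h5 : 0 < deriv f (r ^ 2 + g r ^ 2) := hdfpos _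
    have h6 : (0 : ℝ) ≤ (n : ℝ) - 1 := by linarith
    have h7 : 0 ≤ r + g r * deriv g r := by positivity
    refine add_nonneg (div_nonneg ?_ (by positivity)) (div_nonneg ?_ (by positivity))
    · positivity
    · positivity
  -- Q14 r₁ < 0
  have hQr₁ : Q14 n f g r₁ < 0 := by
    have h := hsecond r₁ hr₁
    nlinarith [sq_nonneg (deriv g r₁), hconc]
  -- main claim: Q14 < 0 on (0, r₁)
  have hQneg : ∀ r ∈ Set.Ioo (0 : ℝ) r₁, Q14 n f g r < 0 := by
    intro r₀ hr₀
    by_contra hcon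
    push_neg at hcon
    have hr₀b : r₀ ∈ Set.Ioo (0 : ℝ) b := ⟨hr₀.1, lt_trans hr₀.2 hr₁.2⟩
    -- the set where Q ≥ 0 inside [r₀, r₁]
    set S : Set ℝ := {x | x ∈ Set.Icc r₀ r₁ ∧ 0 ≤ Q14 n f g x} with hSdef
    have hsubIoo : Set.Icc r₀ r₁ ⊆ Set.Ioo 0 b := fun x hx =>
      ⟨lt_of_lt_of_le hr₀.1 hx.1, lt_of_le_of_lt hx.2 hr₁.2⟩
    have hSclosed : IsClosed S := by
      have : S = Set.Icc r₀ r₁ ∩ (Q14 n f g) ⁻¹' Set.Ici 0 := by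
        ext x; simp [hSdef, Set.mem_Icc, and_assoc]
      rw [this]
      exact (hQc.mono hsubIoo).preimage_isClosed_of_isClosed isClosed_Icc isClosed_Ici
    have hSne : S.Nonempty := ⟨r₀, ⟨le_refl _, le_of_lt hr₀.2⟩, hcon⟩
    have hSbdd : BddAbove S := ⟨r₁, fun x hx => hx.1.2⟩
    set s := sSup S with hs
    have hsS : s ∈ S := hSclosed.csSup_mem hSne hSbdd
    have hsr₁ : s ≤ r₁ := hsS.1.2
    have hsIoo : Set.Icc s r₁ ⊆ Set.Ioo 0 b := fun x hx =>
      hsubIoo ⟨le_trans hsS.1.1 hx.1, hx.2⟩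
    -- Q < 0 strictly to the right of s
    have hQltright : ∀ x ∈ Set.Ioo s r₁, Q14 n f g x < 0 := by
      intro x hx
      by_contra hc
      push_neg at hc
      have : x ∈ S := ⟨⟨le_trans hsS.1.1 (le_of_lt hx.1), le_of_lt hx.2⟩, hc⟩
      exact absurd (le_csSup hSbdd this) (not_le.mpr hx.1)
    -- bound on C14 on the compact interval
    obtain ⟨x₀, hx₀, hx₀max⟩ := isCompact_Icc.exists_isMaxOn
      (Set.nonempty_Icc.mpr hsr₁) (hcc.mono hsIoo)
    set C := C14 n f g x₀ with hC
    -- the auxiliary function u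
    set u : ℝ → ℝ := fun x => Q14 n f g x * Real.exp (-C * x) with hu
    have huderiv : ∀ x ∈ Set.Ioo s r₁,
        HasDerivAt u ((Q14d n f g x - C * Q14 n f g x) * Real.exp (-C * x)) x := by
      intro x hx
      have hxb : x ∈ Set.Ioo 0 b := hsIoo ⟨le_of_lt hx.1, le_of_lt hx.2⟩
      have he : HasDerivAt (fun y => Real.exp (-C * y)) (-C * Real.exp (-C * x)) x := by
        have := (Real.hasDerivAt_exp (-C * x)).comp x
          ((hasDerivAt_id x).const_mul (-C))
        refine this.congr_deriv ?_
        ring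
      have := (hQd x hxb).mul he
      refine this.congr_deriv ?_
      ring
    have humono : MonotoneOn u (Set.Icc s r₁) := by
      apply monotoneOn_of_deriv_nonneg (convex_Icc s r₁)
      · exact ((hQc.mono hsIoo).mul
          ((Real.continuous_exp.comp (continuous_const.mul continuous_id)).continuousOn))
      · intro x hx
        rw [interior_Icc] at hx
        exact (huderiv x hx).differentiableAt.differentiableWithinAt
      · intro x hx
        rw [interior_Icc] at hx
        rw [(huderiv x hx).deriv]
        have hxb : x ∈ Set.Ioo 0 b := hsIoo ⟨le_of_lt hx.1, le_of_lt hx.2⟩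
        have hQx : Q14 n f g x < 0 := hQltright x hx
        have hcle : C14 n f g x ≤ C := hx₀max ⟨le_of_lt hx.1, le_of_lt hx.2⟩
        have hd := hdecomp x hxb
        have hN := hNpos x hxb
        have : 0 ≤ Q14d n f g x - C * Q14 n f g x := by nlinarith
        positivity
    have h1 : u s ≤ u r₁ := humono ⟨le_refl _, hsr₁⟩ ⟨hsr₁, le_refl _⟩ hsr₁
    have h2 : 0 ≤ u s := mul_nonneg hsS.2 (le_of_lt (Real.exp_pos _))
    have h3 : u r₁ < 0 := mul_neg_of_neg_of_pos hQr₁ (Real.exp_pos _)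
    linarith
  -- conclude
  intro r hr
  have hrb : r ∈ Set.Ioo (0 : ℝ) b := ⟨hr.1, lt_trans hr.2 hr₁.2⟩
  rw [hsecond r hrb]
  have h1 : 0 < 1 + deriv g r ^ 2 := by positivity
  exact mul_neg_of_pos_of_neg h1 (hQneg r hr)
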